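/- There exists q₀ such that for every odd prime power q ≥ q₀ the following holds. Let F be a finite field with q² elements, identify F_q with the subfield {x ∈ F : x^q = x}, and fix w ∈ F with w ∉ F_q. Define c : F_q × F_q → {0,1} by c(a,b) = 1 if 1 + w·a is a square in F, and c(a,b) = 0 otherwise. Then: (i) c is balanced, i.e., q²/3 ≤ |{(a,b) ∈ F_q × F_q : c(a,b) = 1}| ≤ 2q²/3; and (ii) for all distinct pairs (x,y), (u,v) ∈ F_q × F_q and every (a,b) ∈ F_q × F_q with a·x = b + y and a·u = b + v, the element (x + y·w) − (u + v·w) of F is a square in F if and only if 1 + w·a is a square in F. -/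

import Mathlib

open Finset Polynomial

set_option maxHeartbeats 2000000 in
/-- There exists `q₀` such that for every odd prime power `q ≥ q₀` the
following holds. Let `F` be a finite field with `q²` elements, identify `F_q` with the
subfield `{x ∈ F : x^q = x}`, and fix `w ∈ F` with `w ∉ F_q`. Define `c : F_q × F_q → {0,1}`
by `c(a,b) = 1` iff `1 + w·a` is a square in `F`. Then:
(i) `c` is balanced, i.e. `q²/3 ≤ |c⁻¹(1)| ≤ 2q²/3`; and
(ii) for all distinct pairs `(x,y), (u,v) ∈ F_q × F_q` and every `(a,b) ∈ F_q × F_q` with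
`a·x = b + y` and `a·u = b + v`, the element `(x + y·w) − (u + v·w)` is a square in `F`
iff `1 + w·a` is a square in `F`. -/
theorem balanced_coloring_from_squares :
    ∃ q₀ : ℕ, ∀ q : ℕ, q₀ ≤ q → Odd q → IsPrimePow q →
      ∀ (F : Type) [Field F] [Fintype F], Fintype.card F = q ^ 2 →
        ∀ w : F, w ^ q ≠ w →
          ((q ^ 2 ≤ 3 * Nat.card {p : F × F //
              p.1 ^ q = p.1 ∧ p.2 ^ q = p.2 ∧ IsSquare (1 + w * p.1)} ∧
            3 * Nat.card {p : F × F //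
              p.1 ^ q = p.1 ∧ p.2 ^ q = p.2 ∧ IsSquare (1 + w * p.1)} ≤ 2 * q ^ 2) ∧
          ∀ x y u v a b : F,
            x ^ q = x → y ^ q = y → u ^ q = u → v ^ q = v → a ^ q = a → b ^ q = b →
            (x, y) ≠ (u, v) → a * x = b + y → a * u = b + v →
            (IsSquare ((x + y * w) - (u + v * w)) ↔ IsSquare (1 + w * a))) := by
  classical
  refine ⟨3, ?_⟩
  intro q hq3 hodd hpp F _ _ hcard w hw
  obtain ⟨p, k, hpP, hk, rfl⟩ := hpp
  have hp : p.Prime := hpP.nat_prime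
  haveI : Fact p.Prime := ⟨hp⟩
  set Q := p ^ k with hQ
  have hQ3 : 3 ≤ Q := hq3
  have hQ1 : 1 < Q := by omega
  have hQ0 : Q ≠ 0 := by omega
  -- characteristic
  have hchar : ringChar F = p := by
    have h0 : ((Q ^ 2 : ℕ) : F) = 0 := by
      rw [← hcard]; exact FiniteField.cast_card_eq_zero F
    have hdvd : ringChar F ∣ Q ^ 2 := (CharP.cast_eq_zero_iff F (ringChar F) (Q ^ 2)).mp h0
    have hrp : (ringChar F).Prime := CharP.char_is_prime F (ringChar F)
    have hdp : ringChar F ∣ p := by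
      have h2 : ringChar F ∣ p ^ (k * 2) := by rwa [pow_mul]
      exact hrp.dvd_of_dvd_pow h2
    exact (Nat.prime_dvd_prime_iff_eq hrp hp).mp hdp
  haveI hCharP : CharP F p := hchar ▸ ringChar.charP F
  have hp2 : p ≠ 2 := by
    intro h
    have : Even Q := by
      rw [hQ, h]; exact Nat.even_pow.mpr ⟨even_two, by omega⟩
    exact (Nat.not_odd_iff_even.mpr this) hodd
  have h2F : (2 : F) ≠ 0 := by
    intro h
    have h2' : ((2 : ℕ) : F) = 0 := by exact_mod_cast h
    have := (CharP.cast_eq_zero_iff F p 2).mp h2'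
    exact hp2 ((Nat.prime_dvd_prime_iff_eq hp Nat.prime_two).mp this)
  -- Frobenius-type facts
  have fr_add : ∀ x y : F, (x + y) ^ Q = x ^ Q + y ^ Q := by
    intro x y; rw [hQ]; exact add_pow_char_pow ..
  have fr_sub : ∀ x y : F, (x - y) ^ Q = x ^ Q - y ^ Q := by
    intro x y; rw [hQ]; exact sub_pow_char_pow ..
  have fr_neg : ∀ x : F, (-x) ^ Q = -(x ^ Q) := fun x => hodd.neg_pow x
  have fr_one : (1 : F) ^ Q = 1 := one_pow _
  have fr_zero : (0 : F) ^ Q = 0 := zero_pow hQ0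
  have fr_two : (2 : F) ^ Q = 2 := by
    have h := fr_add 1 1
    rw [fr_one] at h
    norm_num at h
    exact h
  have fr_mul : ∀ x y : F, (x * y) ^ Q = x ^ Q * y ^ Q := fun x y => mul_pow ..
  have fr_inv : ∀ x : F, (x⁻¹) ^ Q = (x ^ Q)⁻¹ := fun x => inv_pow ..
  have fr_div : ∀ x y : F, (x / y) ^ Q = x ^ Q / y ^ Q := fun x y => div_pow ..
  have fr_pow2 : ∀ x : F, x ^ Q = x → (x ^ 2) ^ Q = x ^ 2 := by
    intro x hx
    rw [← pow_mul, mul_comm, pow_mul, hx]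
  have hw0 : w ≠ 0 := by rintro rfl; exact hw fr_zero
  have hpowF : ∀ x : F, x ^ (Q ^ 2) = x := by
    intro x; rw [← hcard]; exact FiniteField.pow_card x
  -- the subfield as a finset
  set Kf : Finset F := univ.filter (fun x => x ^ Q = x) with hKf
  have memKf : ∀ x : F, x ∈ Kf ↔ x ^ Q = x := by intro x; simp [hKf]
  -- fibers of power maps are small
  have hfib : ∀ n : ℕ, 0 < n → ∀ s : F,
      (univ.filter (fun c : F => c ^ n = s)).card ≤ n := by
    intro n hn s
    have hsub : univ.filter (fun c : F => c ^ n = s) ⊆ (nthRoots n s).toFinset := by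
      intro c hc
      rw [Multiset.mem_toFinset, mem_nthRoots hn]
      simpa using hc
    calc (univ.filter (fun c : F => c ^ n = s)).card
        ≤ (nthRoots n s).toFinset.card := Finset.card_le_card hsub
      _ ≤ Multiset.card (nthRoots n s) := Multiset.toFinset_card_le _
      _ ≤ n := card_nthRoots n s
  -- upper bound on card of Kf
  have hKle : Kf.card ≤ Q := by
    have hne : (X ^ Q - X : F[X]) ≠ 0 := FiniteField.X_pow_card_sub_X_ne_zero F hQ1
    have hsub : Kf ⊆ (X ^ Q - X : F[X]).roots.toFinset := by
      intro x hx
      rw [memKf] at hx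
      rw [Multiset.mem_toFinset, mem_roots hne]
      simp [IsRoot.def, sub_eq_zero, hx]
    calc Kf.card ≤ (X ^ Q - X : F[X]).roots.toFinset.card := Finset.card_le_card hsub
      _ ≤ Multiset.card (X ^ Q - X : F[X]).roots := Multiset.toFinset_card_le _
      _ ≤ (X ^ Q - X : F[X]).natDegree := card_roots' _
      _ = Q := FiniteField.X_pow_card_sub_X_natDegree_eq F hQ1
  have hcard_univ : (univ : Finset F).card = Q ^ 2 := by rw [← hcard]; exact Finset.card_univ
  -- norm map
  have hg_mem : ∀ x : F, (x ^ (Q + 1)) ^ Q = x ^ (Q + 1) := by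
    intro x
    rw [← pow_mul, show (Q + 1) * Q = Q ^ 2 + Q from by ring, pow_add, hpowF x, ← pow_succ']
  have hKge : Q ≤ Kf.card := by
    have hmaps : ∀ x ∈ (univ : Finset F), x ^ (Q + 1) ∈ Kf :=
      fun x _ => (memKf _).mpr (hg_mem x)
    have hle : (univ : Finset F).card ≤ (Q + 1) * Kf.card :=
      Finset.card_le_mul_card_image_of_maps_to hmaps (Q + 1)
        (fun s _ => hfib (Q + 1) (by omega) s)
    rw [hcard_univ] at hle
    nlinarith [hle]
  have hKcard : Kf.card = Q := le_antisymm hKle hKge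
  -- norm surjectivity onto Kf, and squares
  have hnorm_surj : ∀ r : F, r ^ Q = r → ∃ c : F, c ^ (Q + 1) = r := by
    intro r hr
    have himg : (univ : Finset F).image (fun x : F => x ^ (Q + 1)) = Kf := by
      apply Finset.eq_of_subset_of_card_le
      · intro s hs
        obtain ⟨x, _, rfl⟩ := Finset.mem_image.mp hs
        exact (memKf _).mpr (hg_mem x)
      · have h := Finset.card_le_mul_card_image (f := fun x : F => x ^ (Q + 1))
          (univ : Finset F) (Q + 1) (fun s _ => hfib (Q + 1) (by omega) s)
        rw [hcard_univ] at h
        rw [hKcard]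
        nlinarith [h]
    have hmem : r ∈ (univ : Finset F).image (fun x : F => x ^ (Q + 1)) := by
      rw [himg]; exact (memKf r).mpr hr
    obtain ⟨c, _, hc⟩ := Finset.mem_image.mp hmem
    exact ⟨c, hc⟩
  have hsqK : ∀ r : F, r ^ Q = r → IsSquare r := by
    intro r hr
    obtain ⟨c, hc⟩ := hnorm_surj r hr
    obtain ⟨m, hm⟩ := hodd
    refine ⟨c ^ (m + 1), ?_⟩
    rw [← hc, ← pow_add]
    congr 1
    omega
  -- linear independence of 1, w over Kf
  have hindep : ∀ s t : F, s ^ Q = s → t ^ Q = t → s + t * w = 0 → s = 0 ∧ t = 0 := by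
    intro s t hs ht h
    by_cases h0 : t = 0
    · subst h0; constructor
      · simpa using h
      · rfl
    · exfalso
      apply hw
      have hwe : w = -s / t := by
        field_simp
        linear_combination h
      calc w ^ Q = (-s / t) ^ Q := by rw [hwe]
        _ = (-s) ^ Q / t ^ Q := fr_div _ _
        _ = -s / t := by rw [fr_neg, hs, ht]
        _ = w := hwe.symm
  -- representation of every element as s + t * w
  have hrep : ∀ z : F, ∃ s t : F, s ^ Q = s ∧ t ^ Q = t ∧ z = s + t * w := by
    intro z
    have hinjOn : Set.InjOn (fun st : F × F => st.1 + st.2 * w) ↑(Kf ×ˢ Kf) := by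
      rintro ⟨s, t⟩ hst ⟨s', t'⟩ hst' hEq
      simp only [Finset.coe_product, Set.mem_prod, Finset.mem_coe, memKf] at hst hst'
      simp only at hEq
      have h := hindep (s - s') (t - t') (by rw [fr_sub, hst.1, hst'.1])
        (by rw [fr_sub, hst.2, hst'.2]) (by linear_combination hEq)
      have h1 : s = s' := sub_eq_zero.mp h.1
      have h2 : t = t' := sub_eq_zero.mp h.2
      simp [h1, h2]
    have himg : (Kf ×ˢ Kf).image (fun st : F × F => st.1 + st.2 * w) = univ := by
      apply Finset.eq_univ_of_card
      rw [Finset.card_image_of_injOn hinjOn, Finset.card_product, hKcard, hcard]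
      ring
    have hz : z ∈ (Kf ×ˢ Kf).image (fun st : F × F => st.1 + st.2 * w) := by
      rw [himg]; exact mem_univ z
    obtain ⟨⟨s, t⟩, hst, hq'⟩ := Finset.mem_image.mp hz
    rw [Finset.mem_product, memKf, memKf] at hst
    exact ⟨s, t, hst.1, hst.2, hq'.symm⟩
  -- get w^2 = α + β w
  obtain ⟨α, β, hα, hβ, hw2⟩ := hrep (w ^ 2)
  have hα0 : α ≠ 0 := by
    rintro rfl
    have hmul : w * (w - β) = 0 := by linear_combination hw2
    rcases mul_eq_zero.mp hmul with h | h
    · exact hw0 h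
    · have hwβ : w = β := sub_eq_zero.mp h
      exact hw (by rw [hwβ]; exact hβ)
  have hne1 : ∀ a : F, a ^ Q = a → 1 + w * a ≠ 0 := by
    intro a ha h
    have ha0 : a ≠ 0 := by rintro rfl; simp at h
    apply hw
    have hwe : w = -a⁻¹ := by
      field_simp
      linear_combination h
    rw [hwe, fr_neg, fr_inv, ha]
  constructor
  · -- part (i): balancedness
    set A : Finset F := univ.filter (fun a : F => a ^ Q = a ∧ IsSquare (1 + w * a)) with hA
    have hNcard : Nat.card {pp : F × F //
        pp.1 ^ Q = pp.1 ∧ pp.2 ^ Q = pp.2 ∧ IsSquare (1 + w * pp.1)} = A.card * Kf.card := by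
      rw [Nat.card_eq_fintype_card, Fintype.card_subtype, ← Finset.card_product]
      congr 1
      ext ⟨a, b⟩
      simp only [Finset.mem_filter, Finset.mem_univ, true_and, Finset.mem_product, hA, hKf]
      tauto
    -- the set T
    set T : Finset F := univ.filter
      (fun c : F => ((c ^ 2 - 1) * w⁻¹) ^ Q = (c ^ 2 - 1) * w⁻¹) with hT
    have hTA : T.card = 2 * A.card := by
      have hmaps : ∀ c ∈ T, (c ^ 2 - 1) * w⁻¹ ∈ A := by
        intro c hc
        rw [hT, Finset.mem_filter] at hc
        rw [hA, Finset.mem_filter]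
        refine ⟨mem_univ _, hc.2, ?_⟩
        have he : 1 + w * ((c ^ 2 - 1) * w⁻¹) = c ^ 2 := by field_simp; ring
        rw [he]
        exact ⟨c, pow_two c⟩
      rw [Finset.card_eq_sum_card_fiberwise hmaps]
      have hfibeq : ∀ a ∈ A, (T.filter (fun c => (c ^ 2 - 1) * w⁻¹ = a)).card = 2 := by
        intro a ha
        rw [hA, Finset.mem_filter] at ha
        obtain ⟨-, haK, d, hd⟩ := ha
        have hd0 : d ≠ 0 := by
          rintro rfl
          exact hne1 a haK (by rw [hd]; ring)
        have key : ∀ c : F, ((c ^ 2 - 1) * w⁻¹ = a) ↔ (c = d ∨ c = -d) := by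
          intro c
          constructor
          · intro hc
            have h1 : c ^ 2 - 1 = w * a := by
              rw [← hc]; field_simp
            have hc2 : c ^ 2 = d * d := by linear_combination h1 + hd
            have h3 : (c - d) * (c + d) = 0 := by linear_combination hc2
            rcases mul_eq_zero.mp h3 with h | h
            · exact Or.inl (by linear_combination h)
            · exact Or.inr (by linear_combination h)
          · rintro (rfl | rfl)
            · field_simp
              linear_combination -hd
            · field_simp
              linear_combination -hd
        have hset : T.filter (fun c => (c ^ 2 - 1) * w⁻¹ = a) = {d, -d} := by
          ext c
          simp only [Finset.mem_filter, Finset.mem_insert, Finset.mem_singleton, hT,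
            Finset.mem_univ, true_and]
          constructor
          · rintro ⟨-, hc⟩
            exact (key c).mp hc
          · intro h
            have hc := (key c).mpr h
            refine ⟨?_, hc⟩
            rw [hc, haK]
        rw [hset]
        have hdd : d ≠ -d := by
          intro h
          apply hd0
          have h2 : (2 : F) * d = 0 := by linear_combination h
          exact (mul_eq_zero.mp h2).resolve_left h2F
        rw [Finset.card_insert_of_notMem (by simpa using hdd), Finset.card_singleton]
      rw [Finset.sum_congr rfl hfibeq, Finset.sum_const, smul_eq_mul, mul_comm]
    -- the conic
    set Con : Finset (F × F) := (Kf ×ˢ Kf).filter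
      (fun st => st.1 ^ 2 + α * st.2 ^ 2 = 1) with hCon
    have hConT : Con.card = T.card := by
      apply Finset.card_bij (fun st _ => st.1 + st.2 * w)
      · rintro ⟨s, t⟩ hst
        rw [hCon, Finset.mem_filter, Finset.mem_product, memKf, memKf] at hst
        obtain ⟨⟨hs, ht⟩, hconic⟩ := hst
        have hsq2 : (s + t * w) ^ 2 - 1 = w * (2 * s * t + β * t ^ 2) := by
          linear_combination (t ^ 2) * hw2 + hconic
        have ha' : ((s + t * w) ^ 2 - 1) * w⁻¹ = 2 * s * t + β * t ^ 2 := by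
          rw [hsq2]; field_simp
        rw [hT, Finset.mem_filter]
        refine ⟨mem_univ _, ?_⟩
        rw [ha']
        have ht2 : (t ^ 2) ^ Q = t ^ 2 := fr_pow2 t ht
        rw [fr_add, fr_mul, fr_mul, fr_mul, fr_two, hs, ht, hβ, ht2]
      · rintro ⟨s, t⟩ hst ⟨s', t'⟩ hst' hEq
        rw [hCon, Finset.mem_filter, Finset.mem_product, memKf, memKf] at hst hst'
        simp only at hEq
        have h := hindep (s - s') (t - t') (by rw [fr_sub, hst.1.1, hst'.1.1])
          (by rw [fr_sub, hst.1.2, hst'.1.2]) (by linear_combination hEq)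
        have h1 : s = s' := sub_eq_zero.mp h.1
        have h2 : t = t' := sub_eq_zero.mp h.2
        simp [h1, h2]
      · intro c hc
        rw [hT, Finset.mem_filter] at hc
        obtain ⟨-, hcT⟩ := hc
        obtain ⟨s, t, hs, ht, rfl⟩ := hrep c
        refine ⟨(s, t), ?_, rfl⟩
        rw [hCon, Finset.mem_filter, Finset.mem_product, memKf, memKf]
        refine ⟨⟨hs, ht⟩, ?_⟩
        set a := (((s + t * w) ^ 2 - 1) * w⁻¹) with ha'
        have hceq : (s + t * w) ^ 2 = 1 + w * a := by
          rw [ha']; field_simp; ring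
        clear_value a
        have hzero : (s ^ 2 + α * t ^ 2 - 1) + (2 * s * t + β * t ^ 2 - a) * w = 0 := by
          linear_combination hceq - (t ^ 2) * hw2
        have hX : (s ^ 2 + α * t ^ 2 - 1) ^ Q = s ^ 2 + α * t ^ 2 - 1 := by
          rw [fr_sub, fr_add, fr_pow2 s hs, fr_mul, hα, fr_pow2 t ht, fr_one]
        have hY : (2 * s * t + β * t ^ 2 - a) ^ Q = 2 * s * t + β * t ^ 2 - a := by
          rw [fr_sub, fr_add, fr_mul, fr_mul, fr_two, hs, ht, fr_mul, hβ, fr_pow2 t ht, hcT]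
        have h := hindep _ _ hX hY hzero
        linear_combination h.1
    -- the parametrizing set M
    set M : Finset F := Kf.filter (fun m => m ≠ 0 ∧ m ^ 2 + α ≠ 0) with hM
    have hsplit : (Con.filter (fun st => st.2 = 0)).card
        + (Con.filter (fun st => ¬ st.2 = 0)).card = Con.card :=
      Finset.card_filter_add_card_filter_not _
    have h1ne : (1 : F) ≠ -1 := by
      intro h; apply h2F; linear_combination h
    have hC0 : Con.filter (fun st => st.2 = 0) = {((1 : F), (0 : F)), (-1, 0)} := by
      ext ⟨s, t⟩
      simp only [Finset.mem_filter, Finset.mem_insert, Finset.mem_singleton, hCon,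
        Finset.mem_product, memKf, Prod.mk.injEq]
      constructor
      · rintro ⟨⟨⟨hsK, htK⟩, hcon⟩, rfl⟩
        have hs2 : (s - 1) * (s + 1) = 0 := by linear_combination hcon
        rcases mul_eq_zero.mp hs2 with h | h
        · exact Or.inl ⟨by linear_combination h, rfl⟩
        · exact Or.inr ⟨by linear_combination h, rfl⟩
      · rintro (⟨rfl, rfl⟩ | ⟨rfl, rfl⟩)
        · exact ⟨⟨⟨fr_one, fr_zero⟩, by ring⟩, rfl⟩
        · exact ⟨⟨⟨by rw [fr_neg, fr_one], fr_zero⟩, by ring⟩, rfl⟩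
    have hC0card : (Con.filter (fun st => st.2 = 0)).card = 2 := by
      rw [hC0, Finset.card_insert_of_notMem, Finset.card_singleton]
      simp [Prod.ext_iff, h1ne]
    have hC1card : (Con.filter (fun st => ¬ st.2 = 0)).card = M.card := by
      symm
      apply Finset.card_bij
        (fun m _ => ((1 + m * (-(2 * m) / (m ^ 2 + α)), -(2 * m) / (m ^ 2 + α)) : F × F))
      · intro m hm
        rw [hM, Finset.mem_filter, memKf] at hm
        obtain ⟨hmK, hm0, hma⟩ := hm
        set t := -(2 * m) / (m ^ 2 + α) with htdef
        have htK : t ^ Q = t := by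
          rw [htdef, fr_div, fr_neg, fr_mul, fr_two, hmK, fr_add, fr_pow2 m hmK, hα]
        have ht0 : t ≠ 0 := by
          rw [htdef]
          exact div_ne_zero (neg_ne_zero.mpr (mul_ne_zero h2F hm0)) hma
        have hkey : (m ^ 2 + α) * t = -(2 * m) := by
          rw [htdef]; field_simp; try ring
        clear_value t
        rw [Finset.mem_filter, hCon, Finset.mem_filter, Finset.mem_product, memKf, memKf]
        refine ⟨⟨⟨?_, htK⟩, ?_⟩, ht0⟩
        · rw [fr_add, fr_one, fr_mul, hmK, htK]
        · linear_combination t * hkey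
      · intro m hm m' hm' hEq
        rw [hM, Finset.mem_filter, memKf] at hm hm'
        obtain ⟨hmK, hm0, hma⟩ := hm
        have hEq1 := congrArg Prod.fst hEq
        have hEq2 := congrArg Prod.snd hEq
        simp only at hEq1 hEq2
        have ht0 : -(2 * m) / (m ^ 2 + α) ≠ 0 :=
          div_ne_zero (neg_ne_zero.mpr (mul_ne_zero h2F hm0)) hma
        rw [← hEq2] at hEq1
        have : m * (-(2 * m) / (m ^ 2 + α)) = m' * (-(2 * m) / (m ^ 2 + α)) := by
          linear_combination hEq1
        exact mul_right_cancel₀ ht0 this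
      · rintro ⟨s, t⟩ hst
        rw [Finset.mem_filter, hCon, Finset.mem_filter, Finset.mem_product, memKf, memKf] at hst
        obtain ⟨⟨⟨hsK, htK⟩, hcon⟩, ht0⟩ := hst
        refine ⟨(s - 1) / t, ?_, ?_⟩
        · set m := (s - 1) / t with hmdef
          have hmK : m ^ Q = m := by
            rw [hmdef, fr_div, fr_sub, hsK, fr_one, htK]
          have hms : m * t = s - 1 := by
            rw [hmdef]; field_simp
          clear_value m
          have hkey2 : 2 * m * t + (m ^ 2 + α) * t ^ 2 = 0 := by
            linear_combination hcon + (m * t + s + 1) * hms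
          have hm0 : m ≠ 0 := by
            rintro rfl
            have hs1 : s = 1 := by linear_combination -hms
            rw [hs1] at hcon
            have : α * t ^ 2 = 0 := by linear_combination hcon
            rcases mul_eq_zero.mp this with h | h
            · exact hα0 h
            · exact ht0 (pow_eq_zero_iff (by norm_num) |>.mp h)
          have hma : m ^ 2 + α ≠ 0 := by
            intro h
            rw [h] at hkey2
            have : (2 * m) * t = 0 := by linear_combination hkey2
            rcases mul_eq_zero.mp this with h' | h'
            · rcases mul_eq_zero.mp h' with h'' | h''
              · exact h2F h''
              · exact hm0 h''
            · exact ht0 h'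
          rw [hM, Finset.mem_filter, memKf]
          exact ⟨hmK, hm0, hma⟩
        · set m := (s - 1) / t with hmdef
          have hms : m * t = s - 1 := by
            rw [hmdef]; field_simp
          have hkey2 : 2 * m * t + (m ^ 2 + α) * t ^ 2 = 0 := by
            linear_combination hcon + (m * t + s + 1) * hms
          have hm0 : m ≠ 0 := by
            rintro hm00
            rw [hm00] at hms
            have hs1 : s = 1 := by linear_combination -hms
            rw [hs1] at hcon
            have : α * t ^ 2 = 0 := by linear_combination hcon
            rcases mul_eq_zero.mp this with h | h
            · exact hα0 h
            · exact ht0 (pow_eq_zero_iff (by norm_num) |>.mp h)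
          have hma : m ^ 2 + α ≠ 0 := by
            intro h
            rw [h] at hkey2
            have : (2 * m) * t = 0 := by linear_combination hkey2
            rcases mul_eq_zero.mp this with h' | h'
            · rcases mul_eq_zero.mp h' with h'' | h''
              · exact h2F h''
              · exact hm0 h''
            · exact ht0 h'
          have hte : -(2 * m) / (m ^ 2 + α) = t := by
            rw [div_eq_iff hma]
            have : (2 * m + (m ^ 2 + α) * t) * t = 0 := by linear_combination hkey2
            have h' := (mul_eq_zero.mp this).resolve_right ht0
            linear_combination -h'
          have hse : 1 + m * (-(2 * m) / (m ^ 2 + α)) = s := by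
            rw [hte]; linear_combination hms
          rw [hse, hte]
    -- putting the count together
    have hConcard : Con.card = 2 + M.card := by omega
    have hM_upper : M.card ≤ Q - 1 := by
      have hsub : M ⊆ Kf.erase 0 := by
        intro m hm
        rw [hM, Finset.mem_filter] at hm
        rw [Finset.mem_erase]
        exact ⟨hm.2.1, hm.1⟩
      calc M.card ≤ (Kf.erase 0).card := Finset.card_le_card hsub
        _ = Kf.card - 1 := Finset.card_erase_of_mem ((memKf 0).mpr fr_zero)
        _ = Q - 1 := by rw [hKcard]
    have hM_lower : Q ≤ M.card + 3 := by
      have hsplitK : M.card + (Kf.filter (fun m => ¬(m ≠ 0 ∧ m ^ 2 + α ≠ 0))).card = Kf.card := by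
        rw [hM]
        exact Finset.card_filter_add_card_filter_not _
      have hbad : (Kf.filter (fun m => ¬(m ≠ 0 ∧ m ^ 2 + α ≠ 0))).card ≤ 3 := by
        by_cases hex : ∃ r : F, r ^ 2 = -α
        · obtain ⟨r, hr⟩ := hex
          have hsub : Kf.filter (fun m => ¬(m ≠ 0 ∧ m ^ 2 + α ≠ 0)) ⊆ {0, r, -r} := by
            intro m hm
            rw [Finset.mem_filter] at hm
            simp only [Finset.mem_insert, Finset.mem_singleton]
            rcases not_and_or.mp hm.2 with h | h
            · left; exact not_not.mp h
            · have h' : m ^ 2 + α = 0 := not_not.mp h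
              have hm2 : (m - r) * (m + r) = 0 := by linear_combination h' - hr
              rcases mul_eq_zero.mp hm2 with h'' | h''
              · right; left; linear_combination h''
              · right; right; linear_combination h''
          calc (Kf.filter (fun m => ¬(m ≠ 0 ∧ m ^ 2 + α ≠ 0))).card
              ≤ ({0, r, -r} : Finset F).card := Finset.card_le_card hsub
            _ ≤ 3 := by
                apply le_trans (Finset.card_insert_le _ _)
                have : ({r, -r} : Finset F).card ≤ 2 := by
                  apply le_trans (Finset.card_insert_le _ _)
                  simp
                omega
        · have hsub : Kf.filter (fun m => ¬(m ≠ 0 ∧ m ^ 2 + α ≠ 0)) ⊆ {0} := by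
            intro m hm
            rw [Finset.mem_filter] at hm
            simp only [Finset.mem_singleton]
            rcases not_and_or.mp hm.2 with h | h
            · exact not_not.mp h
            · exfalso
              apply hex
              exact ⟨m, by linear_combination (not_not.mp h)⟩
          calc (Kf.filter (fun m => ¬(m ≠ 0 ∧ m ^ 2 + α ≠ 0))).card
              ≤ ({0} : Finset F).card := Finset.card_le_card hsub
            _ ≤ 3 := by simp
      omega
    rw [hNcard, hKcard]
    have hAlow : Q ≤ 2 * A.card + 1 := by omega
    have hAhigh : 2 * A.card ≤ Q + 1 := by omega
    constructor
    · nlinarith [hAlow, hQ3]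
    · nlinarith [hAhigh, hQ3]
  · -- part (ii)
    intro x y u v a b hx hy hu hv ha hb hne h1 h2
    have hyv : y - v = a * (x - u) := by linear_combination h2 - h1
    have hxu : x - u ≠ 0 := by
      intro h
      apply hne
      have hx' : x = u := sub_eq_zero.mp h
      have hy' : y = v := by
        have : y - v = 0 := by rw [hyv, h]; ring
        exact sub_eq_zero.mp this
      rw [hx', hy']
    have hfactor : (x + y * w) - (u + v * w) = (x - u) * (1 + w * a) := by
      linear_combination w * hyv
    have hrK : (x - u) ^ Q = x - u := by rw [fr_sub, hx, hu]
    obtain ⟨d, hd⟩ := hsqK (x - u) hrK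
    have hd0 : d ≠ 0 := by
      rintro rfl
      apply hxu
      rw [hd]; ring
    rw [hfactor, hd]
    constructor
    · rintro ⟨e, he⟩
      refine ⟨e / d, ?_⟩
      field_simp
      linear_combination he
    · rintro ⟨e, he⟩
      exact ⟨d * e, by rw [he]; ring⟩
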